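/- Let X be an uncountable set, m a natural number, and S : [X]^{<ω} → [X]^{<ω} a function. Then there exist a set Y ⊆ X and a bijection u : {1,…,m} → Y such that S(u(A)) ∩ Y ⊆ u(A) whenever A is of the form A = {k : i ≤ k ≤ j} for some i, j ∈ {1,…,m}, where u(A) denotes the image of A under u. -/

import Mathlib

open Set

/-- The "closure" of a countable set `C` under the set mapping `S`: `C` together with all
values of `S` on finite subsets of `C`. -/
private def sBad {X : Type*} (S : Finset X → Finset X) (C : Set X) : Set X :=
  C ∪ ⋃ B ∈ {B : Finset X | ↑B ⊆ C}, (↑(S B) : Set X)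

private lemma subset_sBad {X : Type*} (S : Finset X → Finset X) (C : Set X) :
    C ⊆ sBad S C :=
  Set.subset_union_left

private lemma coeS_subset_sBad {X : Type*} (S : Finset X → Finset X) {C : Set X}
    {B : Finset X} (hB : ↑B ⊆ C) : ↑(S B) ⊆ sBad S C := by
  intro x hx
  exact Or.inr (Set.mem_biUnion hB hx)

private lemma sBad_countable {X : Type*} (S : Finset X → Finset X) {C : Set X}
    (hC : C.Countable) : (sBad S C).Countable := by
  refine hC.union (Set.Countable.biUnion ?_ fun B _ => (S B).finite_toSet.countable)
  have h1 : {B : Finset X | ↑B ⊆ C} = ((↑) : Finset X → Set X) ⁻¹' {t : Set X | t.Finite ∧ t ⊆ C} := by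
    ext B; simp [Finset.finite_toSet]
  rw [h1]
  exact (Set.countable_setOf_finite_subset hC).preimage Finset.coe_injective

private lemma compl_sBad_infinite {X : Type*} [Uncountable X] (S : Finset X → Finset X)
    {C : Set X} (hC : C.Countable) : ((sBad S C)ᶜ).Infinite := by
  intro hfin
  have huniv : (Set.univ : Set X).Countable := by
    rw [← Set.union_compl_self (sBad S C)]
    exact (sBad_countable S hC).union hfin.countable
  exact not_countable (Set.countable_univ_iff.mp huniv)

private lemma exists_pick {X : Type*} [Uncountable X] (S : Finset X → Finset X)
    {C : Set X} (hC : C.Countable) :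
    ∃ d : ℕ → X, Function.Injective d ∧ ∀ n, d n ∉ sBad S C := by
  have h := compl_sBad_infinite S hC
  refine ⟨fun n => (Set.Infinite.natEmbedding _ h n : X), ?_, ?_⟩
  · intro a b hab
    exact (Set.Infinite.natEmbedding _ h).injective (Subtype.val_injective hab)
  · intro n; exact (Set.Infinite.natEmbedding _ h n).2

/-- A stratified family of countable sets: each stratum avoids the `S`-closure of the
union of all earlier strata. -/
private lemma exists_strata {X : Type*} [Uncountable X] (S : Finset X → Finset X) :
    ∃ (D : ℕ → Set X) (d : ℕ → ℕ → X),
      (∀ t, Function.Injective (d t)) ∧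
      (∀ t n, d t n ∉ sBad S (D t)) ∧ (∀ t n, d t n ∈ D (t + 1)) ∧
      (∀ t, D t ⊆ D (t + 1)) := by
  choose f hf1 hf2 using fun C : {C : Set X // C.Countable} => exists_pick S C.2
  let Ds : ℕ → {C : Set X // C.Countable} :=
    fun t => Nat.rec ⟨∅, Set.countable_empty⟩
      (fun _ C => ⟨C.1 ∪ Set.range (f C), C.2.union (Set.countable_range _)⟩) t
  refine ⟨fun t => (Ds t).1, fun t => f (Ds t), fun t => hf1 _, fun t => hf2 _, ?_, ?_⟩
  · intro t n
    exact Set.mem_union_right _ ⟨n, rfl⟩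
  · intro t
    exact Set.subset_union_left

theorem statement1 {X : Type*} [DecidableEq X] [Uncountable X] (m : ℕ)
    (S : Finset X → Finset X) :
    ∃ u : ℕ → X, Set.InjOn u ↑(Finset.Icc 1 m) ∧
      ∀ i ∈ Finset.Icc 1 m, ∀ j ∈ Finset.Icc 1 m,
        S ((Finset.Icc i j).image u) ∩ (Finset.Icc 1 m).image u ⊆
          (Finset.Icc i j).image u := by
  obtain ⟨D, d, hdinj, hdbad, hdmem, hDsub⟩ := exists_strata S
  have hDmono : Monotone D := monotone_nat_of_le_succ hDsub
  -- Build the points from right to left: `w s` lies in stratum `s` and avoids the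
  -- `S`-values of all blocks of already-chosen (higher-index) points.
  have claim : ∀ n : ℕ, ∃ w : ℕ → X,
      (∀ s, m - n < s → s ≤ m → w s ∉ sBad S (D s) ∧ w s ∈ D (s + 1)) ∧
      (∀ t i j, m - n < t → t ≤ m → t < i → j ≤ m →
        w t ∉ S ((Finset.Icc i j).image w)) := by
    intro n
    induction n with
    | zero =>
      exact ⟨fun _ => d 0 0, fun s hs1 hs2 => absurd hs1 (by omega),
        fun t i j ht1 ht2 _ _ => absurd ht1 (by omega)⟩
    | succ n ih =>
      obtain ⟨w', h1, h2⟩ := ih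
      set t := m - n with ht
      set F : Finset X := ((Finset.Icc (t+1) m) ×ˢ (Finset.Icc (t+1) m)).biUnion
          (fun p => S ((Finset.Icc p.1 p.2).image w')) with hF
      have hex : ∃ n₀, d t n₀ ∉ F := by
        have hinf : (Set.range (d t)).Infinite := Set.infinite_range_of_injective (hdinj t)
        obtain ⟨x, hx1, hx2⟩ := (hinf.diff F.finite_toSet).nonempty
        obtain ⟨n₀, rfl⟩ := hx1
        exact ⟨n₀, hx2⟩
      obtain ⟨n₀, hn₀⟩ := hex
      have himg : ∀ i j : ℕ, t < i →
          (Finset.Icc i j).image (Function.update w' t (d t n₀))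
            = (Finset.Icc i j).image w' := by
        intro i j hi
        apply Finset.image_congr
        intro k hk
        have hk' : i ≤ k ∧ k ≤ j := by
          simpa [Finset.coe_Icc, Set.mem_Icc] using hk
        exact Function.update_of_ne (by omega) _ _
      refine ⟨Function.update w' t (d t n₀), ?_, ?_⟩
      · intro s hs1 hs2
        by_cases hst : s = t
        · subst hst
          rw [Function.update_self]
          exact ⟨hdbad t n₀, hdmem t n₀⟩
        · have hgt : m - n < s := by omega
          rw [Function.update_of_ne hst]
          exact h1 s hgt hs2
      · intro t' i j h01 h02 h03 h04
        have htt' : t ≤ t' := by omega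
        have hti : t < i := by omega
        rw [himg i j hti]
        by_cases hst : t' = t
        · rw [hst, Function.update_self]
          by_cases hij : i ≤ j
          · intro hmem
            apply hn₀
            rw [hF]
            refine Finset.mem_biUnion.mpr ⟨(i, j), ?_, hmem⟩
            rw [Finset.mem_product, Finset.mem_Icc, Finset.mem_Icc]
            omega
          · have hempty : Finset.Icc i j = ∅ := Finset.Icc_eq_empty (by omega)
            rw [hempty, Finset.image_empty]
            intro hmem
            exact hdbad t n₀ (coeS_subset_sBad S (by simp) hmem)
        · have hgt : m - n < t' := by omega
          rw [Function.update_of_ne hst]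
          exact h2 t' i j hgt h02 h03 h04
  obtain ⟨w, h1, h2⟩ := claim m
  have key : ∀ a b, 1 ≤ a → a ≤ m → b ≤ m → a < b → w a ≠ w b := by
    intro a b ha1 ha2 hb2 hab heq
    have h1a := (h1 a (by omega) ha2).2
    have h1b := (h1 b (by omega) hb2).1
    have hmem : w a ∈ D b := hDmono (show a + 1 ≤ b by omega) h1a
    rw [heq] at hmem
    exact h1b (subset_sBad S (D b) hmem)
  refine ⟨w, ?_, ?_⟩
  · intro a ha b hb hab
    simp only [Finset.coe_Icc, Set.mem_Icc] at ha hb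
    by_contra hne
    rcases lt_trichotomy a b with h | h | h
    · exact key a b ha.1 ha.2 hb.2 h hab
    · exact hne h
    · exact key b a hb.1 hb.2 ha.2 h hab.symm
  · intro i hi j hj x hx
    rw [Finset.mem_inter] at hx
    obtain ⟨hxS, hxY⟩ := hx
    obtain ⟨t', ht', heq⟩ := Finset.mem_image.mp hxY
    subst heq
    rw [Finset.mem_Icc] at ht' hi hj
    by_cases hmem : i ≤ t' ∧ t' ≤ j
    · exact Finset.mem_image_of_mem w (Finset.mem_Icc.mpr hmem)
    · exfalso
      rw [not_and_or, not_le, not_le] at hmem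
      rcases hmem with hlt | hgt
      · exact h2 t' i j (by omega) ht'.2 hlt hj.2 hxS
      · have hsub : ↑((Finset.Icc i j).image w) ⊆ D t' := by
          intro y hy
          simp only [Finset.coe_image, Set.mem_image, Finset.mem_coe, Finset.mem_Icc] at hy
          obtain ⟨k, hk, rfl⟩ := hy
          exact hDmono (show k + 1 ≤ t' by omega) (h1 k (by omega) (by omega)).2
        exact (h1 t' (by omega) ht'.2).1 (coeS_subset_sBad S hsub hxS)
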